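/- arXiv:2509.03927 — 4 statements merged into one kernel-verified Lean document; each statement's English description precedes it below -/
import Mathlib

section
/- Let (G_n)_{n∈ℕ} be an inverse system of finite nilpotent groups with surjective transition maps, let G = lim← G_n be the inverse limit with canonical surjective projections π_n : G → G_n, and set S_n = π_n(ker π_{n−1}) ≤ G_n. If there exists n₀ ∈ ℕ such that S_n ≤ G_n′ (the commutator subgroup of G_n) for all n ≥ n₀, then G is topologically finitely generated; moreover, for any generating set T_{n₀} of G_{n₀}, every extension T ⊆ G of T_{n₀} topologically generates G (in the congruence topology), and g(G) = g(G_{n₀}). -/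
namespace InvLim

variable {Gn : ℕ → Type*} [∀ n, Group (Gn n)]

/-- The inverse limit of an `ℕ`-indexed inverse system of groups with transition maps
`f n : G_{n+1} →* G_n`, realized as the subgroup of compatible sequences in the product. -/
def invLim (Gn : ℕ → Type*) [∀ n, Group (Gn n)] (f : ∀ n, Gn (n + 1) →* Gn n) :
    Subgroup (∀ n, Gn n) where
  carrier := {x | ∀ n, f n (x (n + 1)) = x n}
  one_mem' := fun n => by simp
  mul_mem' := by
    intro x y hx hy n
    simp only [Pi.mul_apply, map_mul, hx n, hy n]
  inv_mem' := by
    intro x hx n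
    simp only [Pi.inv_apply, map_inv, hx n]

/-- The canonical projection `π_n : lim← G_n → G_n`. -/
def plim (Gn : ℕ → Type*) [∀ n, Group (Gn n)] (f : ∀ n, Gn (n + 1) →* Gn n) (n : ℕ) :
    ↥(invLim Gn f) →* Gn n :=
  (Pi.evalMonoidHom Gn n).comp (invLim Gn f).subtype

/-- The congruence topology on the inverse limit: the topology induced from the product of
the discrete topologies, for which the kernels `ker π_n` form a base of open neighborhoods
of the identity. -/
instance invLimTopology (Gn : ℕ → Type*) [∀ n, Group (Gn n)] (f : ∀ n, Gn (n + 1) →* Gn n) :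
    TopologicalSpace ↥(invLim Gn f) :=
  TopologicalSpace.induced (Subtype.val) (@Pi.topologicalSpace ℕ Gn (fun _ => ⊥))

end InvLim

namespace InvLim

/-! ### Auxiliary group-theoretic lemmas -/

open scoped commutatorElement in
lemma aux_commutator_le_coatom {G : Type*} [Group G] (hnil : Group.IsNilpotent G)
    {K : Subgroup G} (hK : IsCoatom K) : commutator G ≤ K := by
  haveI := hnil
  haveI : K.Normal :=
    Subgroup.NormalizerCondition.normal_of_coatom K normalizerCondition_of_isNilpotent hK
  obtain ⟨g, -, hg⟩ := SetLike.exists_of_lt (lt_top_iff_ne_top.2 hK.1)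
  set q : G ⧸ K := (g : G ⧸ K) with hqdef
  have hzp : ∀ x : G ⧸ K, x ∈ Subgroup.zpowers q := by
    have hle : K ≤ Subgroup.comap (QuotientGroup.mk' K) (Subgroup.zpowers q) := by
      intro k hk
      have : ((k : G ⧸ K)) = 1 := (QuotientGroup.eq_one_iff k).2 hk
      simp only [Subgroup.mem_comap, QuotientGroup.mk'_apply, this]
      exact Subgroup.one_mem _
    have hne : K ≠ Subgroup.comap (QuotientGroup.mk' K) (Subgroup.zpowers q) := by
      intro h
      apply hg
      have : g ∈ Subgroup.comap (QuotientGroup.mk' K) (Subgroup.zpowers q) := by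
        simp only [Subgroup.mem_comap, QuotientGroup.mk'_apply]
        exact Subgroup.mem_zpowers q
      rwa [← h] at this
    have htop : Subgroup.comap (QuotientGroup.mk' K) (Subgroup.zpowers q) = ⊤ :=
      hK.2 _ (lt_of_le_of_ne hle hne)
    intro x
    obtain ⟨y, rfl⟩ := QuotientGroup.mk'_surjective K x
    have : y ∈ Subgroup.comap (QuotientGroup.mk' K) (Subgroup.zpowers q) :=
      htop ▸ Subgroup.mem_top y
    simpa using this
  have hcomm : ∀ a b : G ⧸ K, a * b = b * a := by
    intro a b
    obtain ⟨m, hm⟩ := Subgroup.mem_zpowers_iff.1 (hzp a)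
    obtain ⟨k, hk⟩ := Subgroup.mem_zpowers_iff.1 (hzp b)
    subst hm; subst hk
    exact ((Commute.refl q).zpow_zpow m k).eq
  rw [commutator_def, Subgroup.commutator_le]
  intro a _ b _
  rw [← QuotientGroup.eq_one_iff]
  rw [show ((⁅a, b⁆ : G) : G ⧸ K) = ⁅(a : G ⧸ K), (b : G ⧸ K)⁆ from
    map_commutatorElement (QuotientGroup.mk' K) a b]
  exact commutatorElement_eq_one_iff_mul_comm.2 (hcomm _ _)

lemma aux_eq_top_of_sup_commutator {G : Type*} [Group G] [Finite G] (hnil : Group.IsNilpotent G)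
    {K : Subgroup G} (h : K ⊔ commutator G = ⊤) : K = ⊤ := by
  haveI : Finite (Subgroup G) := Finite.of_injective _ SetLike.coe_injective
  apply frattini_nongenerating
  rw [eq_top_iff, ← h]
  apply sup_le_sup_left
  exact le_iInf fun M => le_iInf fun hM => aux_commutator_le_coatom hnil hM

/-! ### Auxiliary inverse-limit lemmas -/

variable {Gn : ℕ → Type*} [∀ n, Group (Gn n)]

/-- Cast along an equality of indices. -/
def cg {a b : ℕ} (h : a = b) (x : Gn a) : Gn b := h ▸ x

omit [∀ n, Group (Gn n)] in
lemma cg_self {a : ℕ} (h : a = a) (x : Gn a) : cg h x = x := rfl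

omit [∀ n, Group (Gn n)] in
lemma cg_cg {a b c : ℕ} (h₁ : a = b) (h₂ : b = c) (x : Gn a) :
    cg h₂ (cg h₁ x) = cg (h₁.trans h₂) x := by subst h₁; subst h₂; rfl

variable (f : ∀ n, Gn (n + 1) →* Gn n)

lemma cg_f {a b : ℕ} (h : a = b) (h2 : a + 1 = b + 1) (x : Gn (a + 1)) :
    f b (cg h2 x) = cg h (f a x) := by subst h; rfl

/-- Iterated transition map `Gn (m+k) →* Gn m`. -/
def tr (m : ℕ) : ∀ k, Gn (m + k) →* Gn m
  | 0 => MonoidHom.id _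
  | k + 1 => (tr m k).comp (f (m + k))

lemma f_tr (m : ℕ) : ∀ (k : ℕ) (y : Gn (m + 1 + k)),
    f m (tr f (m + 1) k y) = tr f m (k + 1) (cg (by omega) y)
  | 0, y => rfl
  | k + 1, y => by
    have h' : m + 1 + k = m + (k + 1) := by omega
    calc f m (tr f (m + 1) (k + 1) y) = f m (tr f (m + 1) k (f (m + 1 + k) y)) := rfl
      _ = tr f m (k + 1) (cg h' (f (m + 1 + k) y)) := f_tr m k _
      _ = tr f m (k + 1) (f (m + (k + 1)) (cg (by omega) y)) := by
          rw [cg_f f h' _ y]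
      _ = tr f m (k + 2) (cg (by omega) y) := rfl

lemma plim_surjective (hf : ∀ n, Function.Surjective (f n)) (n : ℕ) :
    Function.Surjective (plim Gn f n) := by
  intro g
  let e : ∀ k, Gn (n + k) := fun k => Nat.rec g (fun k ek => (hf (n + k) ek).choose) k
  have he : ∀ k, f (n + k) (e (k + 1)) = e k := fun k => (hf (n + k) (e k)).choose_spec
  let x : ∀ m, Gn m := fun m => tr f m n (cg (Nat.add_comm n m) (e m))
  have hx : x ∈ invLim Gn f := by
    intro m
    show f m (tr f (m + 1) n (cg (Nat.add_comm n (m + 1)) (e (m + 1)))) = x m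
    rw [f_tr f m n _]
    rw [cg_cg]
    have h : n + m = m + n := Nat.add_comm n m
    show tr f m n (f (m + n) (cg ((Nat.add_comm n (m+1)).trans (by omega)) (e (m + 1)))) = x m
    rw [cg_f f h _ (e (m + 1)), he m]
  refine ⟨⟨x, hx⟩, ?_⟩
  show tr f n n (cg (Nat.add_comm n n) (e n)) = g
  rw [cg_self]
  have : ∀ k, tr f n k (e k) = g := by
    intro k
    induction k with
    | zero => rfl
    | succ k ih => show tr f n k (f (n + k) (e (k + 1))) = g; rw [he k]; exact ih
  exact this n

lemma compat (x : ↥(invLim Gn f)) (n : ℕ) : f n (x.1 (n + 1)) = x.1 n := x.2 n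

lemma eq_of_high : ∀ (k m : ℕ) (x y : ↥(invLim Gn f)),
    x.1 (m + k) = y.1 (m + k) → x.1 m = y.1 m
  | 0, m, x, y, h => h
  | k + 1, m, x, y, h => by
    refine eq_of_high k m x y ?_
    have h' : x.1 ((m + k) + 1) = y.1 ((m + k) + 1) := h
    rw [← compat f x (m + k), ← compat f y (m + k), h']

lemma eq_of_le {m N : ℕ} (h : m ≤ N) (x y : ↥(invLim Gn f)) (hxy : x.1 N = y.1 N) :
    x.1 m = y.1 m := by
  obtain ⟨k, rfl⟩ := Nat.exists_eq_add_of_le h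
  exact eq_of_high f k m x y hxy

lemma map_plim_step (H : Subgroup ↥(invLim Gn f)) (n : ℕ) :
    Subgroup.map (plim Gn f n) H = Subgroup.map (f n) (Subgroup.map (plim Gn f (n + 1)) H) := by
  rw [Subgroup.map_map]
  congr 1
  exact (MonoidHom.ext fun x => (x.2 n).symm)

/-- If a subgroup surjects onto every level, it is dense in the congruence topology. -/
lemma dense_of_maps_top (H : Subgroup ↥(invLim Gn f))
    (h : ∀ n, Subgroup.map (plim Gn f n) H = ⊤) :
    Dense (H : Set ↥(invLim Gn f)) := by
  letI : ∀ n, TopologicalSpace (Gn n) := fun _ => ⊥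
  haveI : ∀ n, DiscreteTopology (Gn n) := fun _ => ⟨rfl⟩
  rw [dense_iff_inter_open]
  rintro U hU ⟨x, hxU⟩
  obtain ⟨V, hV, rfl⟩ := isOpen_induced_iff.1 hU
  obtain ⟨I, u, hu, hIV⟩ := isOpen_pi_iff.1 hV x.1 hxU
  set N := I.sup id with hN
  have : plim Gn f N x ∈ Subgroup.map (plim Gn f N) H := (h N).symm ▸ Subgroup.mem_top _
  obtain ⟨y, hyH, hy⟩ := this
  refine ⟨y, ?_, hyH⟩
  show y.1 ∈ V
  apply hIV
  intro i hi
  have : y.1 i = x.1 i := eq_of_le f (Finset.le_sup (f := id) hi) y x hy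
  rw [this]
  exact (hu i hi).2

/-- Conversely, a dense subgroup surjects onto every level. -/
lemma maps_top_of_dense (hf : ∀ n, Function.Surjective (f n)) (H : Subgroup ↥(invLim Gn f))
    (hd : Dense (H : Set ↥(invLim Gn f))) (n : ℕ) :
    Subgroup.map (plim Gn f n) H = ⊤ := by
  letI : ∀ n, TopologicalSpace (Gn n) := fun _ => ⊥
  haveI : ∀ n, DiscreteTopology (Gn n) := fun _ => ⟨rfl⟩
  rw [eq_top_iff]
  rintro g -
  obtain ⟨x, hx⟩ := plim_surjective f hf n g
  have hc : Continuous (fun y : ↥(invLim Gn f) => y.1 n) := by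
    have h1 : Continuous (Subtype.val : ↥(invLim Gn f) → ∀ m, Gn m) := continuous_induced_dom
    exact (continuous_apply n).comp h1
  have hopen : IsOpen {y : ↥(invLim Gn f) | y.1 n = x.1 n} := by
    show IsOpen ((fun y : ↥(invLim Gn f) => y.1 n) ⁻¹' {x.1 n})
    exact hc.isOpen_preimage _ (isOpen_discrete _)
  obtain ⟨y, hy1, hy2⟩ := dense_iff_inter_open.1 hd _ hopen ⟨x, rfl⟩
  refine ⟨y, hy2, ?_⟩
  show y.1 n = g
  exact hy1.trans hx

/-- The key induction: if a subgroup surjects onto level `n₀`, it surjects onto every level. -/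
lemma maps_top_all [∀ n, Finite (Gn n)] (hnil : ∀ n, Group.IsNilpotent (Gn n))
    (hf : ∀ n, Function.Surjective (f n)) (n₀ : ℕ)
    (hS : ∀ n, n₀ ≤ n →
      ((plim Gn f (n - 1)).ker.map (plim Gn f n)) ≤ commutator (Gn n))
    (H : Subgroup ↥(invLim Gn f)) (hH : Subgroup.map (plim Gn f n₀) H = ⊤) :
    ∀ n, Subgroup.map (plim Gn f n) H = ⊤ := by
  have up : ∀ k, Subgroup.map (plim Gn f (n₀ + k)) H = ⊤ := by
    intro k
    induction k with
    | zero => exact hH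
    | succ k ih =>
      set n := n₀ + k with hn
      show Subgroup.map (plim Gn f (n + 1)) H = ⊤
      apply aux_eq_top_of_sup_commutator (hnil (n + 1))
      rw [eq_top_iff]
      rintro g -
      obtain ⟨x, hx⟩ := plim_surjective f hf (n + 1) g
      have : plim Gn f n x ∈ Subgroup.map (plim Gn f n) H := ih ▸ Subgroup.mem_top _
      obtain ⟨y, hyH, hy⟩ := this
      have hker : x * y⁻¹ ∈ (plim Gn f n).ker := by
        rw [MonoidHom.mem_ker, map_mul, map_inv, hy, mul_inv_cancel]
      have hcomm : plim Gn f (n + 1) (x * y⁻¹) ∈ commutator (Gn (n + 1)) :=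
        hS (n + 1) (by omega) (Subgroup.mem_map.2 ⟨x * y⁻¹, hker, rfl⟩)
      have hgeq : g = plim Gn f (n + 1) (x * y⁻¹) * plim Gn f (n + 1) y := by
        rw [map_mul, map_inv, inv_mul_cancel_right, hx]
      rw [hgeq]
      exact mul_mem (Subgroup.mem_sup_right hcomm)
        (Subgroup.mem_sup_left (Subgroup.mem_map.2 ⟨y, hyH, rfl⟩))
  have down : ∀ j m, Subgroup.map (plim Gn f (m + j)) H = ⊤ →
      Subgroup.map (plim Gn f m) H = ⊤ := by
    intro j
    induction j with
    | zero => exact fun m h => h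
    | succ j ih =>
      intro m h
      apply ih
      have h' : Subgroup.map (plim Gn f ((m + j) + 1)) H = ⊤ := h
      rw [map_plim_step, h']
      exact Subgroup.map_top_of_surjective _ (hf (m + j))
  intro n
  refine down n₀ n ?_
  rw [Nat.add_comm]
  exact up n

end InvLim

namespace InvLim

/-- Let `(G_n)` be an inverse system of finite nilpotent groups with
surjective transition maps, `G = lim← G_n` its inverse limit with projections `π_n`, and
`S_n = π_n(ker π_{n-1})`.  If there is `n₀` with `S_n ≤ G_n'` for all `n ≥ n₀`, then `G` is
topologically finitely generated; moreover every extension `T ⊆ G` of a generating set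
`T_{n₀}` of `G_{n₀}` topologically generates `G`, and `g(G) = g(G_{n₀})`. -/
theorem statement_4 (Gn : ℕ → Type*) [∀ n, Group (Gn n)] [∀ n, Finite (Gn n)]
    (hnil : ∀ n, Group.IsNilpotent (Gn n))
    (f : ∀ n, Gn (n + 1) →* Gn n) (hf : ∀ n, Function.Surjective (f n))
    (n₀ : ℕ)
    (hS : ∀ n, n₀ ≤ n →
      ((plim Gn f (n - 1)).ker.map (plim Gn f n)) ≤ commutator (Gn n)) :
    (∃ S : Set ↥(invLim Gn f), S.Finite ∧
        Dense ((Subgroup.closure S : Subgroup ↥(invLim Gn f)) : Set ↥(invLim Gn f))) ∧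
    (∀ T₀ : Set (Gn n₀), Subgroup.closure T₀ = ⊤ →
      ∀ T : Set ↥(invLim Gn f), Set.BijOn (plim Gn f n₀) T T₀ →
        Dense ((Subgroup.closure T : Subgroup ↥(invLim Gn f)) : Set ↥(invLim Gn f))) ∧
    sInf {k : ℕ | ∃ S : Finset ↥(invLim Gn f), S.card = k ∧
        Dense ((Subgroup.closure (S : Set ↥(invLim Gn f)) :
          Subgroup ↥(invLim Gn f)) : Set ↥(invLim Gn f))}
      = sInf {k : ℕ | ∃ S : Finset (Gn n₀), S.card = k ∧
          Subgroup.closure (S : Set (Gn n₀)) = ⊤} := by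
  classical
  -- a section of `plim n₀`
  set σ : Gn n₀ → ↥(invLim Gn f) := Function.surjInv (plim_surjective f hf n₀) with hσdef
  have hσ : ∀ g, plim Gn f n₀ (σ g) = g := Function.rightInverse_surjInv _
  have hσinj : Function.Injective σ := Function.injective_surjInv _
  -- density from generation at level n₀
  have key : ∀ T : Set ↥(invLim Gn f), Subgroup.closure (plim Gn f n₀ '' T) = ⊤ →
      Dense ((Subgroup.closure T : Subgroup ↥(invLim Gn f)) : Set ↥(invLim Gn f)) := by
    intro T hT
    apply dense_of_maps_top
    apply maps_top_all f hnil hf n₀ hS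
    rw [MonoidHom.map_closure, hT]
  -- lifting finite generating sets
  have lift : ∀ S₀ : Finset (Gn n₀), Subgroup.closure (S₀ : Set (Gn n₀)) = ⊤ →
      ∃ S : Finset ↥(invLim Gn f), S.card = S₀.card ∧
        Dense ((Subgroup.closure (S : Set ↥(invLim Gn f)) :
          Subgroup ↥(invLim Gn f)) : Set ↥(invLim Gn f)) := by
    intro S₀ h₀
    refine ⟨S₀.image σ, Finset.card_image_of_injective _ hσinj, ?_⟩
    apply key
    rw [Finset.coe_image, ← Set.image_comp]
    have : (plim Gn f n₀) ∘ σ = id := funext hσ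
    rw [this, Set.image_id, h₀]
  -- a finite generating set of `Gn n₀`
  have hBmem : ∃ S₀ : Finset (Gn n₀), Subgroup.closure (S₀ : Set (Gn n₀)) = ⊤ := by
    refine ⟨(Set.finite_univ (α := Gn n₀)).toFinset, ?_⟩
    rw [Set.Finite.coe_toFinset, Subgroup.closure_univ]
  obtain ⟨S₀u, hS₀u⟩ := hBmem
  obtain ⟨Su, hSucard, hSudense⟩ := lift S₀u hS₀u
  refine ⟨⟨(Su : Set ↥(invLim Gn f)), Su.finite_toSet, hSudense⟩, ?_, ?_⟩
  · -- part 2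
    intro T₀ hT₀ T hT
    apply key
    rw [hT.image_eq, hT₀]
  · -- part 3
    have hBne : {k : ℕ | ∃ S : Finset (Gn n₀), S.card = k ∧
        Subgroup.closure (S : Set (Gn n₀)) = ⊤}.Nonempty := ⟨S₀u.card, S₀u, rfl, hS₀u⟩
    have hAne : {k : ℕ | ∃ S : Finset ↥(invLim Gn f), S.card = k ∧
        Dense ((Subgroup.closure (S : Set ↥(invLim Gn f)) :
          Subgroup ↥(invLim Gn f)) : Set ↥(invLim Gn f))}.Nonempty :=
      ⟨Su.card, Su, rfl, hSudense⟩
    apply le_antisymm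
    · obtain ⟨S₀, hcard, hgen⟩ := Nat.sInf_mem hBne
      obtain ⟨S, hScard, hSdense⟩ := lift S₀ hgen
      exact Nat.sInf_le ⟨S, by rw [hScard, hcard], hSdense⟩
    · obtain ⟨S, hScard, hSdense⟩ := Nat.sInf_mem hAne
      refine le_trans (Nat.sInf_le ⟨S.image (plim Gn f n₀), rfl, ?_⟩) ?_
      · rw [Finset.coe_image, ← MonoidHom.map_closure]
        exact maps_top_of_dense f hf _ hSdense n₀
      · rw [← hScard]
        exact Finset.card_image_le

end InvLim
end

section
/- Let 𝒢 be a topological group, G a subgroup of 𝒢, cl(G) the closure of G in 𝒢, and H a closed subgroup of cl(G) of finite index [cl(G) : H] < ∞. Then cl(G ∩ H) = H, where cl denotes closure in 𝒢. -/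
/-- Let `𝒢` be a topological group, `G ≤ 𝒢` a subgroup, `cl(G)` its closure,
and `H` a closed subgroup of `cl(G)` of finite index.  Then `cl(G ∩ H) = H`. -/
theorem statement_7 {𝒢 : Type*} [Group 𝒢] [TopologicalSpace 𝒢] [IsTopologicalGroup 𝒢]
    (G H : Subgroup 𝒢) (hHcl : IsClosed (H : Set 𝒢)) (hle : H ≤ G.topologicalClosure)
    (hfin : H.relIndex G.topologicalClosure ≠ 0) :
    closure ((G ⊓ H : Subgroup 𝒢) : Set 𝒢) = (H : Set 𝒢) := by
  set K := G.topologicalClosure with hK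
  -- H as a subgroup of K
  set H' : Subgroup K := H.subgroupOf K with hH'
  have hH'fin : H'.FiniteIndex := ⟨hfin⟩
  have hH'closed : IsClosed (H' : Set K) := by
    have : (H' : Set K) = Subtype.val ⁻¹' (H : Set 𝒢) := rfl
    rw [this]
    exact hHcl.preimage continuous_subtype_val
  have hH'open : IsOpen (H' : Set K) :=
    Subgroup.isOpen_of_isClosed_of_finiteIndex H' hH'closed
  obtain ⟨W, hWopen, hW⟩ := isOpen_induced_iff.mp hH'open
  apply le_antisymm
  · exact closure_minimal (fun x hx => hx.2) hHcl
  · intro h hh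
    rw [mem_closure_iff]
    intro U hUopen hhU
    have hhK : h ∈ K := hle hh
    have hhW : h ∈ W := by
      have : (⟨h, hhK⟩ : K) ∈ H' := hh
      have h2 : (⟨h, hhK⟩ : K) ∈ Subtype.val ⁻¹' W := by
        rw [hW]; exact this
      exact h2
    have hhcl : h ∈ closure (G : Set 𝒢) := hhK
    rw [mem_closure_iff] at hhcl
    obtain ⟨g, ⟨hgU, hgW⟩, hgG⟩ := hhcl (U ∩ W) (hUopen.inter hWopen) ⟨hhU, hhW⟩
    have hgK : g ∈ K := G.le_topologicalClosure hgG
    have hgH : g ∈ H := by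
      have : (⟨g, hgK⟩ : K) ∈ Subtype.val ⁻¹' W := hgW
      rw [hW] at this
      exact this
    exact ⟨g, hgU, hgG, hgH⟩
end

section
/- Let 𝒢 be a topological group and let K ≤ H be subgroups of 𝒢 with [H : K] finite. Then [cl(H) : cl(K)] ≤ [H : K], where cl denotes topological closure in 𝒢. -/
open scoped Pointwise

/-- Let `𝒢` be a topological group and `K ≤ H ≤ 𝒢` with `[H : K]` finite.
Then `[cl(H) : cl(K)] ≤ [H : K]`. -/
theorem statement_8 {𝒢 : Type*} [Group 𝒢] [TopologicalSpace 𝒢] [IsTopologicalGroup 𝒢]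
    (H K : Subgroup 𝒢) (hKH : K ≤ H) (hfin : K.relIndex H ≠ 0) :
    K.topologicalClosure.relIndex H.topologicalClosure ≤ K.relIndex H := by
  set K' := K.subgroupOf H
  have hfin' : Finite (H ⧸ K') := by
    rw [Subgroup.relIndex, Subgroup.index] at hfin
    exact (Nat.card_ne_zero.mp hfin).2
  set cH := H.topologicalClosure
  set cK := K.topologicalClosure
  -- the finite union of coset translates of cl K over representatives
  set S : Set 𝒢 := ⋃ q : H ⧸ K', ((Quotient.out q : H) : 𝒢) • (cK : Set 𝒢)
  have hSclosed : IsClosed S :=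
    isClosed_iUnion_of_finite fun q => K.isClosed_topologicalClosure.smul _
  have hHS : (H : Set 𝒢) ⊆ S := by
    intro h hh
    refine Set.mem_iUnion.mpr ⟨QuotientGroup.mk ⟨h, hh⟩, ?_⟩
    have : ((QuotientGroup.mk ⟨h, hh⟩ : H ⧸ K').out : H)⁻¹ * ⟨h, hh⟩ ∈ K' := by
      rw [← QuotientGroup.eq]
      exact QuotientGroup.out_eq' _
    have hmem : (((QuotientGroup.mk ⟨h, hh⟩ : H ⧸ K').out : H) : 𝒢)⁻¹ * h ∈ K := this
    exact ⟨_, K.le_topologicalClosure hmem, by simp [smul_eq_mul]⟩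
  have hcHS : (cH : Set 𝒢) ⊆ S := closure_minimal hHS hSclosed
  -- surjection from H ⧸ K' onto cH ⧸ cK.subgroupOf cH
  set F : (H ⧸ K') → (cH ⧸ cK.subgroupOf cH) := fun q =>
    QuotientGroup.mk ⟨((Quotient.out q : H) : 𝒢), H.le_topologicalClosure (Quotient.out q).2⟩
  have hFsurj : Function.Surjective F := by
    intro x
    induction x using QuotientGroup.induction_on with
    | H x =>
      obtain ⟨q, hq⟩ := Set.mem_iUnion.mp (hcHS x.2)
      obtain ⟨k, hk, hkx⟩ := hq
      refine ⟨q, ?_⟩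
      have : (⟨((Quotient.out q : H) : 𝒢), H.le_topologicalClosure (Quotient.out q).2⟩ : cH)⁻¹ * x
          ∈ cK.subgroupOf cH := by
        show ((((Quotient.out q : H) : 𝒢))⁻¹ * (x : 𝒢)) ∈ cK
        have : (((Quotient.out q : H) : 𝒢))⁻¹ * (x : 𝒢) = k := by
          rw [← hkx]; simp [smul_eq_mul]
        rwa [this]
      exact (QuotientGroup.eq ).mpr this
  calc K.topologicalClosure.relIndex H.topologicalClosure
      = Nat.card (cH ⧸ cK.subgroupOf cH) := rfl
    _ ≤ Nat.card (H ⧸ K') := Nat.card_le_card_of_surjective F hFsurj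
    _ = K.relIndex H := rfl
end

section
/- Let p be a prime, T the p-regular rooted tree, and G ≤ W_p an infinite self-similar subgroup, where W_p = {g ∈ Aut(T) : for every vertex v, the action of g|_v on the first level is a power of the cycle (1 2 … p)}. Then G is level-transitive, i.e. G acts transitively on every level of T. -/
theorem Equiv.Perm.apply_inv_self {α : Type*} (f : Equiv.Perm α) (x : α) : f (f⁻¹ x) = x :=
  Equiv.apply_symm_apply f x

theorem Equiv.Perm.inv_apply_self {α : Type*} (f : Equiv.Perm α) (x : α) : f⁻¹ (f x) = x :=
  Equiv.symm_apply_apply f x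

namespace TreeFT

/-- Vertices of the `d`-regular rooted tree: finite words over `Fin d`. -/
abbrev Vertex (d : ℕ) := List (Fin d)

/-- The automorphism group of the `d`-regular rooted tree, realized as the subgroup of
permutations of the vertex set that preserve length (levels) and prefixes (adjacency). -/
def treeAut (d : ℕ) : Subgroup (Equiv.Perm (Vertex d)) where
  carrier := {g | (∀ v : Vertex d, (g v).length = v.length) ∧
      (∀ v w : Vertex d, (g (v ++ w)).take v.length = g v)}
  one_mem' := ⟨fun _ => rfl, fun v w => List.take_left⟩
  mul_mem' := by
    rintro g h ⟨hg1, hg2⟩ ⟨hh1, hh2⟩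
    refine ⟨fun v => by rw [Equiv.Perm.mul_apply, hg1, hh1], fun v w => ?_⟩
    have h1 : h (v ++ w) = h v ++ (h (v ++ w)).drop v.length := by
      conv_lhs => rw [← List.take_append_drop v.length (h (v ++ w))]
      rw [hh2]
    rw [Equiv.Perm.mul_apply, Equiv.Perm.mul_apply, h1]
    have h2 : v.length = (h v).length := (hh1 v).symm
    rw [h2]
    exact hg2 _ _
  inv_mem' := by
    rintro g ⟨hg1, hg2⟩
    constructor
    · intro v
      have h := hg1 (g⁻¹ v)
      rw [Equiv.Perm.apply_inv_self] at h
      exact h.symm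
    · intro v w
      apply g.injective
      have hlen : v.length ≤ (g⁻¹ (v ++ w)).length := by
        have h := hg1 (g⁻¹ (v ++ w))
        rw [Equiv.Perm.apply_inv_self] at h
        rw [← h, List.length_append]
        exact Nat.le_add_right _ _
      have h3 := hg2 ((g⁻¹ (v ++ w)).take v.length) ((g⁻¹ (v ++ w)).drop v.length)
      rw [List.take_append_drop, Equiv.Perm.apply_inv_self, List.length_take,
        min_eq_left hlen, List.take_left] at h3
      rw [← h3, Equiv.Perm.apply_inv_self]

variable {d : ℕ}

/-- `Aut(T)` as a type. -/
abbrev TAut (d : ℕ) := ↥(treeAut d)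

lemma length_apply (g : TAut d) (v : Vertex d) :
    ((g : Equiv.Perm (Vertex d)) v).length = v.length := g.2.1 v

lemma take_apply (g : TAut d) (v w : Vertex d) :
    ((g : Equiv.Perm (Vertex d)) (v ++ w)).take v.length = (g : Equiv.Perm (Vertex d)) v :=
  g.2.2 v w

lemma apply_append (g : TAut d) (v w : Vertex d) :
    (g : Equiv.Perm (Vertex d)) (v ++ w) =
      (g : Equiv.Perm (Vertex d)) v ++ ((g : Equiv.Perm (Vertex d)) (v ++ w)).drop v.length := by
  conv_lhs => rw [← List.take_append_drop v.length ((g : Equiv.Perm (Vertex d)) (v ++ w))]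
  rw [take_apply]

/-- The section `g|_v` of a tree automorphism at the vertex `v`. -/
def sect (g : TAut d) (v : Vertex d) : TAut d :=
  ⟨{ toFun := fun w => ((g : Equiv.Perm (Vertex d)) (v ++ w)).drop v.length
     invFun := fun w =>
       (((g : Equiv.Perm (Vertex d)))⁻¹ ((g : Equiv.Perm (Vertex d)) v ++ w)).drop v.length
     left_inv := by
       intro w
       show ((g : Equiv.Perm (Vertex d))⁻¹
         ((g : Equiv.Perm (Vertex d)) v ++
           ((g : Equiv.Perm (Vertex d)) (v ++ w)).drop v.length)).drop v.length = w
       rw [← apply_append g v w, Equiv.Perm.inv_apply_self, List.drop_left]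
     right_inv := by
       intro w
       show ((g : Equiv.Perm (Vertex d))
         (v ++ ((g : Equiv.Perm (Vertex d))⁻¹
           ((g : Equiv.Perm (Vertex d)) v ++ w)).drop v.length)).drop v.length = w
       have h2 := apply_append g⁻¹ ((g : Equiv.Perm (Vertex d)) v) w
       simp only [InvMemClass.coe_inv] at h2
       rw [Equiv.Perm.inv_apply_self, length_apply] at h2
       rw [← h2, Equiv.Perm.apply_inv_self, ← length_apply g v, List.drop_left] },
   by
    constructor
    · intro w
      simp only [Equiv.coe_fn_mk, List.length_drop, length_apply, List.length_append]
      omega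
    · intro w u
      simp only [Equiv.coe_fn_mk]
      rw [← List.append_assoc]
      have h0 : ((g : Equiv.Perm (Vertex d)) ((v ++ w) ++ u)).take (v ++ w).length
          = (g : Equiv.Perm (Vertex d)) (v ++ w) := take_apply g (v ++ w) u
      have h1 : w.length = (v.length + w.length) - v.length := by omega
      rw [h1, ← List.drop_take, ← List.length_append, h0]⟩

lemma sect_apply (g : TAut d) (v w : Vertex d) :
    ((sect g v : TAut d) : Equiv.Perm (Vertex d)) w
      = ((g : Equiv.Perm (Vertex d)) (v ++ w)).drop v.length := rfl

lemma sect_mul (g h : TAut d) (v : Vertex d) :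
    sect (g * h) v = sect g ((h : Equiv.Perm (Vertex d)) v) * sect h v := by
  apply Subtype.ext
  apply Equiv.ext
  intro w
  simp only [MulMemClass.coe_mul, Equiv.Perm.mul_apply, sect_apply]
  rw [← apply_append h v w, length_apply]

lemma sect_one (v : Vertex d) : sect (1 : TAut d) v = 1 := by
  apply Subtype.ext
  apply Equiv.ext
  intro w
  simp only [sect_apply, OneMemClass.coe_one, Equiv.Perm.coe_one, id_eq]
  exact List.drop_left

end TreeFT
namespace TreeFT

variable {d : ℕ}

/-- The stabilizer `St(n)` of the `n`-th level: automorphisms acting trivially on the first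
`n` levels of the tree. -/
def lst (d n : ℕ) : Subgroup (TAut d) where
  carrier := {g | ∀ v : Vertex d, v.length ≤ n → (g : Equiv.Perm (Vertex d)) v = v}
  one_mem' := fun _ _ => rfl
  mul_mem' := by
    intro g h hg hh v hv
    show (g : Equiv.Perm (Vertex d)) ((h : Equiv.Perm (Vertex d)) v) = v
    rw [hh v hv, hg v hv]
  inv_mem' := by
    intro g hg v hv
    show ((g : Equiv.Perm (Vertex d)))⁻¹ v = v
    apply (g : Equiv.Perm (Vertex d)).injective
    rw [Equiv.Perm.apply_inv_self, hg v hv]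

lemma mem_lst {g : TAut d} {n : ℕ} :
    g ∈ lst d n ↔ ∀ v : Vertex d, v.length ≤ n → (g : Equiv.Perm (Vertex d)) v = v :=
  Iff.rfl

instance lst_normal (d n : ℕ) : (lst d n).Normal := by
  constructor
  intro s hs g v hv
  show (g : Equiv.Perm (Vertex d))
    ((s : Equiv.Perm (Vertex d)) (((g : Equiv.Perm (Vertex d)))⁻¹ v)) = v
  have h1 : ((g⁻¹ : TAut d) : Equiv.Perm (Vertex d)) v = ((g : Equiv.Perm (Vertex d)))⁻¹ v := by
    simp
  have h2 : (((g : Equiv.Perm (Vertex d)))⁻¹ v).length ≤ n := by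
    rw [← h1, length_apply]; exact hv
  rw [hs _ h2, Equiv.Perm.apply_inv_self]

/-- `Aut(T^n)`, the automorphism group of the finite tree consisting of the first `n` levels,
realized as the quotient of `Aut(T)` by the `n`-th level stabilizer. -/
abbrev FAut (d n : ℕ) := TAut d ⧸ lst d n

/-- `π_n : Aut(T) → Aut(T^n)`, restriction to the first `n` levels. -/
def proj (d n : ℕ) : TAut d →* FAut d n := QuotientGroup.mk' (lst d n)

lemma proj_surjective (d n : ℕ) : Function.Surjective (proj d n) :=
  QuotientGroup.mk'_surjective _

/-- The group of finite type `G_P` of depth `D` with pattern group `P ≤ Aut(T^D)`: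
all tree automorphisms whose section at every vertex acts on the first `D` levels as an
element of `P`. -/
def gft (d D : ℕ) (P : Subgroup (FAut d D)) : Subgroup (TAut d) where
  carrier := {g | ∀ v : Vertex d, proj d D (sect g v) ∈ P}
  one_mem' := by
    intro v
    rw [sect_one, map_one]
    exact one_mem P
  mul_mem' := by
    intro g h hg hh v
    rw [sect_mul, map_mul]
    exact mul_mem (hg _) (hh _)
  inv_mem' := by
    intro g hg v
    have h2 : sect g (((g⁻¹ : TAut d) : Equiv.Perm (Vertex d)) v) * sect g⁻¹ v = 1 := by
      rw [← sect_mul, mul_inv_cancel, sect_one]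
    have h3 : sect g⁻¹ v = (sect g (((g⁻¹ : TAut d) : Equiv.Perm (Vertex d)) v))⁻¹ :=
      (inv_eq_of_mul_eq_one_right h2).symm
    rw [h3, map_inv]
    exact inv_mem (hg _)

lemma mem_gft {g : TAut d} {D : ℕ} {P : Subgroup (FAut d D)} :
    g ∈ gft d D P ↔ ∀ v : Vertex d, proj d D (sect g v) ∈ P := Iff.rfl

/-- `P ≤ Aut(T^D)` is a minimal pattern subgroup if `π_D(G_P) = P`. -/
def IsMinimalPattern (d D : ℕ) (P : Subgroup (FAut d D)) : Prop :=
  (gft d D P).map (proj d D) = P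

/-- A subgroup of `Aut(T)` is level-transitive if it acts transitively on every level. -/
def LevelTransitive (H : Subgroup (TAut d)) : Prop :=
  ∀ v w : Vertex d, v.length = w.length → ∃ g ∈ H, (g : Equiv.Perm (Vertex d)) v = w

/-- A subgroup of `Aut(T)` is self-similar if it contains all sections of its elements. -/
def SelfSimilar (H : Subgroup (TAut d)) : Prop :=
  ∀ g ∈ H, ∀ v : Vertex d, sect g v ∈ H

/-- A subgroup of `Aut(T)` is fractal if it is self-similar, level-transitive, and for every
vertex `v` the section map maps the stabilizer of `v` onto the whole group. -/
def Fractal (H : Subgroup (TAut d)) : Prop :=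
  SelfSimilar H ∧ LevelTransitive H ∧
    ∀ v : Vertex d, ∀ h ∈ H, ∃ k ∈ H, (k : Equiv.Perm (Vertex d)) v = v ∧ sect k v = h

/-- The geometric product `K_n` of `K` at level `n`: elements of `St(n)` all of whose sections
at level-`n` vertices lie in `K`. -/
def geom (K : Subgroup (TAut d)) (n : ℕ) : Subgroup (TAut d) where
  carrier := {g | g ∈ lst d n ∧ ∀ v : Vertex d, v.length = n → sect g v ∈ K}
  one_mem' := ⟨one_mem _, fun v _ => by rw [sect_one]; exact one_mem K⟩
  mul_mem' := by
    rintro g h ⟨hg1, hg2⟩ ⟨hh1, hh2⟩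
    refine ⟨mul_mem hg1 hh1, fun v hv => ?_⟩
    rw [sect_mul, hh1 v hv.le]
    exact mul_mem (hg2 v hv) (hh2 v hv)
  inv_mem' := by
    rintro g ⟨hg1, hg2⟩
    refine ⟨inv_mem hg1, fun v hv => ?_⟩
    have hfix : ((g⁻¹ : TAut d) : Equiv.Perm (Vertex d)) v = v :=
      (inv_mem hg1 : g⁻¹ ∈ lst d n) v hv.le
    have h2 : sect g v * sect g⁻¹ v = 1 := by
      have := sect_mul g g⁻¹ v
      rw [mul_inv_cancel, sect_one, hfix] at this
      exact this.symm
    rw [(inv_eq_of_mul_eq_one_right h2).symm]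
    exact inv_mem (hg2 v hv)

end TreeFT
namespace TreeFT

variable {d : ℕ}

/-- The congruence topology on `Aut(T)`: the topology of pointwise convergence on the vertex
set (each vertex set carrying the discrete topology); the level stabilizers `St(n)` form a
base of neighborhoods of the identity for it. -/
instance tautTopologicalSpace (d : ℕ) : TopologicalSpace (TAut d) :=
  TopologicalSpace.induced
    (fun g : TAut d => ((g : Equiv.Perm (Vertex d)) : Vertex d → Vertex d))
    (@Pi.topologicalSpace (Vertex d) (fun _ => Vertex d) (fun _ => ⊥))

lemma isOpen_eval (d : ℕ) (v u : Vertex d) :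
    IsOpen {g : TAut d | (g : Equiv.Perm (Vertex d)) v = u} := by
  letI : TopologicalSpace (Vertex d) := ⊥
  haveI : DiscreteTopology (Vertex d) := ⟨rfl⟩
  have h : IsOpen ((fun f : Vertex d → Vertex d => f v) ⁻¹' {u}) :=
    (continuous_apply (A := fun _ : Vertex d => Vertex d) v).isOpen_preimage ({u} : Set (Vertex d)) (isOpen_discrete _)
  exact isOpen_induced h

lemma isOpen_eval_mem (d : ℕ) (v : Vertex d) (s : Set (Vertex d)) :
    IsOpen {g : TAut d | (g : Equiv.Perm (Vertex d)) v ∈ s} := by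
  have h : {g : TAut d | (g : Equiv.Perm (Vertex d)) v ∈ s}
      = ⋃ u ∈ s, {g : TAut d | (g : Equiv.Perm (Vertex d)) v = u} := by
    ext g; simp
  rw [h]
  exact isOpen_biUnion fun u _ => isOpen_eval d v u

lemma continuous_into_vertex {X : Type*} [TopologicalSpace X] (f : X → Vertex d)
    (h : ∀ u : Vertex d, IsOpen (f ⁻¹' {u})) :
    @Continuous X (Vertex d) _ ⊥ f := by
  rw [continuous_def]
  intro s _
  have hs : f ⁻¹' s = ⋃ u ∈ s, f ⁻¹' {u} := by
    ext x; simp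
  rw [hs]
  exact isOpen_biUnion fun u _ => h u

instance tautContinuousMul (d : ℕ) : ContinuousMul (TAut d) := by
  constructor
  · -- continuity of multiplication
    apply continuous_induced_rng.2
    apply @continuous_pi _ _ _ _ (fun _ => (⊥ : TopologicalSpace (Vertex d)))
    intro v
    apply continuous_into_vertex
      (f := fun p : TAut d × TAut d => ((p.1 * p.2 : TAut d) : Equiv.Perm (Vertex d)) v)
    intro u
    have h : (fun p : TAut d × TAut d =>
          ((p.1 * p.2 : TAut d) : Equiv.Perm (Vertex d)) v) ⁻¹' {u}
        = ⋃ w : Vertex d, ({g : TAut d | (g : Equiv.Perm (Vertex d)) w = u} ×ˢ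
            {h : TAut d | (h : Equiv.Perm (Vertex d)) v = w}) := by
      ext p
      simp only [Set.mem_preimage, Set.mem_singleton_iff, Set.mem_iUnion, Set.mem_prod,
        Set.mem_setOf_eq]
      constructor
      · intro hp
        exact ⟨(p.2 : Equiv.Perm (Vertex d)) v, hp, rfl⟩
      · rintro ⟨w, hw1, hw2⟩
        show (p.1 : Equiv.Perm (Vertex d)) ((p.2 : Equiv.Perm (Vertex d)) v) = u
        rw [hw2]; exact hw1
    rw [h]
    exact isOpen_iUnion fun w => (isOpen_eval d w u).prod (isOpen_eval d v w)

instance tautContinuousInv (d : ℕ) : ContinuousInv (TAut d) := by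
  constructor
  · -- continuity of inversion
    apply continuous_induced_rng.2
    apply @continuous_pi _ _ _ _ (fun _ => (⊥ : TopologicalSpace (Vertex d)))
    intro v
    apply continuous_into_vertex
      (f := fun g : TAut d => ((g⁻¹ : TAut d) : Equiv.Perm (Vertex d)) v)
    intro u
    have h : (fun g : TAut d => ((g⁻¹ : TAut d) : Equiv.Perm (Vertex d)) v) ⁻¹' {u}
        = {g : TAut d | (g : Equiv.Perm (Vertex d)) u = v} := by
      ext g
      simp only [Set.mem_preimage, Set.mem_singleton_iff, Set.mem_setOf_eq,
        InvMemClass.coe_inv]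
      constructor
      · intro hg; rw [← hg, Equiv.Perm.apply_inv_self]
      · intro hg; rw [← hg, Equiv.Perm.inv_apply_self]
    rw [h]
    exact isOpen_eval d u v

instance tautTopologicalGroup (d : ℕ) : IsTopologicalGroup (TAut d) := ⟨⟩

/-- A subgroup of `Aut(T)` (viewed as a topological group with the congruence topology) is
topologically finitely generated if it contains a finitely generated dense subgroup. -/
def TopFG (H : Subgroup (TAut d)) : Prop :=
  ∃ S : Set ↥H, S.Finite ∧ Dense ((Subgroup.closure S : Subgroup ↥H) : Set ↥H)

/-- A profinite group is just-infinite if it is infinite and every nontrivial closed normal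
subgroup has finite index. -/
def JustInfinite (H : Subgroup (TAut d)) : Prop :=
  Infinite ↥H ∧ ∀ N : Subgroup ↥H, N.Normal → IsClosed (N : Set ↥H) → N ≠ ⊥ → N.index ≠ 0

/-- A profinite group is strongly complete if every subgroup of finite index is open. -/
def StronglyComplete (H : Subgroup (TAut d)) : Prop :=
  ∀ N : Subgroup ↥H, N.index ≠ 0 → IsOpen (N : Set ↥H)

end TreeFT

namespace TreeFT

section Aux11

lemma fin_nsmul_surj {p : ℕ} [NeZero p] (hp : p.Prime) (k : Fin p) (hk : k ≠ 0) (y : Fin p) :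
    ∃ m : ℕ, m • k = y := by
  have hdvd : addOrderOf k ∣ p := by
    have := addOrderOf_dvd_card (x := k)
    rwa [Fintype.card_fin] at this
  have hord : addOrderOf k = p := by
    rcases (hp.eq_one_or_self_of_dvd _ hdvd) with h | h
    · exact absurd (AddMonoid.addOrderOf_eq_one_iff.mp h) hk
    · exact h
  have htop : AddSubgroup.zmultiples k = ⊤ := by
    apply AddSubgroup.eq_top_of_card_eq
    rw [Nat.card_zmultiples, hord, Nat.card_eq_fintype_card, Fintype.card_fin]
  have hy : y ∈ AddSubgroup.zmultiples k := htop ▸ AddSubgroup.mem_top y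
  exact (isOfFinAddOrder_of_finite k).mem_multiples_iff_mem_zmultiples.mpr hy

end Aux11

/-- Let `p` be a prime, `T` the `p`-regular rooted tree, and `G ≤ W_p` an
infinite self-similar subgroup, where `W_p` consists of the automorphisms all of whose labels
are powers of the cycle `(1 2 … p)` (acting on `Fin p` as `x ↦ x + k`).  Then `G` is
level-transitive. -/
theorem statement_11 (p : ℕ) (hp : p.Prime) (G : Subgroup (TAut p))
    (hWp : ∀ g ∈ G, ∀ v : Vertex p, ∃ k : Fin p, ∀ x : Fin p,
      (g : Equiv.Perm (Vertex p)) (v ++ [x]) = (g : Equiv.Perm (Vertex p)) v ++ [x + k])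
    (hss : SelfSimilar G) (hinf : Infinite ↥G) :
    LevelTransitive G := by
  classical
  haveI : NeZero p := ⟨hp.ne_zero⟩
  suffices H : ∀ n : ℕ, ∀ v w : Vertex p, v.length = n → w.length = n →
      ∃ g ∈ G, (g : Equiv.Perm (Vertex p)) v = w by
    intro v w h
    exact H w.length v w h rfl
  intro n
  induction n with
  | zero =>
    intro v w hv hw
    rw [List.length_eq_zero_iff] at hv hw
    subst hv; subst hw
    exact ⟨1, one_mem G, rfl⟩
  | succ n IH =>
    by_cases hact : ∃ (w0 : Vertex p) (g : TAut p) (x : Fin p),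
        w0.length = n ∧ g ∈ G ∧ (g : Equiv.Perm (Vertex p)) w0 = w0 ∧
        (g : Equiv.Perm (Vertex p)) (w0 ++ [x]) ≠ w0 ++ [x]
    · -- active case: there is a nontrivial label at some level-n vertex
      obtain ⟨w0, g0, x0, hw0, hg0, hfix0, hne0⟩ := hact
      obtain ⟨k, hk⟩ := hWp g0 hg0 w0
      have hk' : ∀ x : Fin p, (g0 : Equiv.Perm (Vertex p)) (w0 ++ [x]) = w0 ++ [x + k] := by
        intro x; rw [hk x, hfix0]
      have hk0 : k ≠ 0 := by
        intro h; apply hne0; rw [hk' x0, h, add_zero]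
      have hpow : ∀ m : ℕ, ((g0 ^ m : TAut p) : Equiv.Perm (Vertex p)) w0 = w0 ∧
          ∀ x : Fin p, ((g0 ^ m : TAut p) : Equiv.Perm (Vertex p)) (w0 ++ [x])
            = w0 ++ [x + m • k] := by
        intro m
        induction m with
        | zero =>
          constructor
          · simp
          · intro x; simp
        | succ m ih =>
          have hcoe : ((g0 ^ (m + 1) : TAut p) : Equiv.Perm (Vertex p)) =
              ((g0 ^ m : TAut p) : Equiv.Perm (Vertex p)) * (g0 : Equiv.Perm (Vertex p)) := by
            rw [pow_succ, MulMemClass.coe_mul]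
          constructor
          · rw [hcoe, Equiv.Perm.mul_apply, hfix0, ih.1]
          · intro x
            rw [hcoe, Equiv.Perm.mul_apply, hk' x, ih.2]
            have : x + k + m • k = x + (m + 1) • k := by rw [succ_nsmul]; abel
            rw [this]
      have move : ∀ w' : Vertex p, w'.length = n → ∀ x y : Fin p,
          ∃ h ∈ G, (h : Equiv.Perm (Vertex p)) w' = w' ∧
            (h : Equiv.Perm (Vertex p)) (w' ++ [x]) = w' ++ [y] := by
        intro w' hw' x y
        obtain ⟨a, ha, haw⟩ := IH w' w0 hw' hw0
        obtain ⟨t, ht⟩ := hWp a ha w'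
        obtain ⟨m, hm⟩ := fin_nsmul_surj hp k hk0 (y - x)
        refine ⟨a⁻¹ * g0 ^ m * a, mul_mem (mul_mem (inv_mem ha) (pow_mem hg0 m)) ha, ?_, ?_⟩
        · simp only [MulMemClass.coe_mul, InvMemClass.coe_inv, Equiv.Perm.mul_apply]
          rw [haw, (hpow m).1, ← haw, Equiv.Perm.inv_apply_self]
        · simp only [MulMemClass.coe_mul, InvMemClass.coe_inv, Equiv.Perm.mul_apply]
          rw [ht x, haw, (hpow m).2, hm]
          have hxy : x + t + (y - x) = y + t := by abel
          rw [hxy]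
          have h2 := ht y
          rw [haw] at h2
          rw [← h2, Equiv.Perm.inv_apply_self]
      intro v w hv hw
      have hvne : v ≠ [] := by intro h; rw [h] at hv; simp at hv
      have hwne : w ≠ [] := by intro h; rw [h] at hw; simp at hw
      have hv1 : v.dropLast ++ [v.getLast hvne] = v := List.dropLast_append_getLast hvne
      have hw1 : w.dropLast ++ [w.getLast hwne] = w := List.dropLast_append_getLast hwne
      have hu1 : v.dropLast.length = n := by rw [List.length_dropLast, hv]; omega
      have hu2 : w.dropLast.length = n := by rw [List.length_dropLast, hw]; omega
      obtain ⟨g, hg, hgv⟩ := IH v.dropLast w.dropLast hu1 hu2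
      obtain ⟨s, hs⟩ := hWp g hg v.dropLast
      obtain ⟨h, hh, _, hmove⟩ := move w.dropLast hu2 (v.getLast hvne + s) (w.getLast hwne)
      refine ⟨h * g, mul_mem hh hg, ?_⟩
      rw [MulMemClass.coe_mul, Equiv.Perm.mul_apply, ← hv1, hs _, hgv, hmove, hw1]
    · -- rigid case: contradiction with G being infinite
      exfalso
      push_neg at hact
      have step : ∀ m : ℕ, ∀ g ∈ G,
          (∀ u : Vertex p, u.length ≤ n + m → (g : Equiv.Perm (Vertex p)) u = u) →
          ∀ u : Vertex p, u.length ≤ n + m + 1 → (g : Equiv.Perm (Vertex p)) u = u := by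
        intro m
        induction m with
        | zero =>
          intro g hg hfix u hu
          rcases Nat.lt_or_ge u.length (n + 1) with hlt | hge
          · exact hfix u (by omega)
          · have hlen : u.length = n + 1 := by omega
            have hune : u ≠ [] := by intro h; rw [h] at hlen; simp at hlen
            have hsplit : u.dropLast ++ [u.getLast hune] = u := List.dropLast_append_getLast hune
            have hdl : u.dropLast.length = n := by rw [List.length_dropLast, hlen]; omega
            have hfixd : (g : Equiv.Perm (Vertex p)) u.dropLast = u.dropLast :=
              hfix _ (by omega)
            rw [← hsplit]
            exact hact u.dropLast g (u.getLast hune) hdl hg hfixd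
        | succ m ih =>
          intro g hg hfix u hu
          rcases Nat.lt_or_ge u.length (n + m + 2) with hlt | hge
          · exact hfix u (by omega)
          · have hlen : u.length = n + m + 2 := by omega
            have hune : u ≠ [] := by intro h; rw [h] at hlen; simp at hlen
            have hsplit : [u.head hune] ++ u.tail = u := by
              rw [List.singleton_append, List.cons_head_tail]
            have htl : u.tail.length = n + m + 1 := by rw [List.length_tail, hlen]; omega
            have hsec : sect g [u.head hune] ∈ G := hss g hg _
            have hsfix : ∀ u'' : Vertex p, u''.length ≤ n + m →
                ((sect g [u.head hune] : TAut p) : Equiv.Perm (Vertex p)) u'' = u'' := by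
              intro u'' hu''
              rw [sect_apply]
              rw [hfix ([u.head hune] ++ u'') (by
                rw [List.length_append, List.length_singleton]; omega)]
              exact List.drop_left
            have hstep := ih (sect g [u.head hune]) hsec hsfix u.tail (by omega)
            rw [sect_apply] at hstep
            have hfix1 : (g : Equiv.Perm (Vertex p)) [u.head hune] = [u.head hune] :=
              hfix _ (by rw [List.length_singleton]; omega)
            rw [← hsplit, apply_append, hfix1, hstep]
      have allfix : ∀ g ∈ G,
          (∀ u : Vertex p, u.length ≤ n → (g : Equiv.Perm (Vertex p)) u = u) →
          ∀ u : Vertex p, (g : Equiv.Perm (Vertex p)) u = u := by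
        intro g hg h0 u
        have hmm : ∀ m : ℕ, ∀ u' : Vertex p, u'.length ≤ n + m →
            (g : Equiv.Perm (Vertex p)) u' = u' := by
          intro m
          induction m with
          | zero => intro u' hu'; exact h0 u' (by omega)
          | succ m ih => exact step m g hg ih
        exact hmm u.length u (by omega)
      have triv : ∀ g ∈ G,
          (∀ u : Vertex p, u.length ≤ n → (g : Equiv.Perm (Vertex p)) u = u) → g = 1 := by
        intro g hg h0
        apply Subtype.ext
        apply Equiv.ext
        intro u
        simp only [OneMemClass.coe_one, Equiv.Perm.coe_one, id_eq]
        exact allfix g hg h0 u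
      let F : ↥G → ((Fin n → Fin p) → (Fin n → Fin p)) := fun g f i =>
        (((g : TAut p) : Equiv.Perm (Vertex p)) (List.ofFn f)).get ⟨i, by
          rw [length_apply, List.length_ofFn]; exact i.isLt⟩
      have hFinj : Function.Injective F := by
        intro g1 g2 hF
        have key : ∀ f : Fin n → Fin p,
            ((g1 : TAut p) : Equiv.Perm (Vertex p)) (List.ofFn f)
              = ((g2 : TAut p) : Equiv.Perm (Vertex p)) (List.ofFn f) := by
          intro f
          apply List.ext_get
          · rw [length_apply, length_apply]
          · intro i h1 h2
            have hi : i < n := by rw [length_apply, List.length_ofFn] at h1; exact h1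
            have := congrFun (congrFun hF f) ⟨i, hi⟩
            simpa [F] using this
        have keyv : ∀ u : Vertex p, u.length = n →
            ((g1 : TAut p) : Equiv.Perm (Vertex p)) u
              = ((g2 : TAut p) : Equiv.Perm (Vertex p)) u := by
          intro u hu
          have hofn : List.ofFn (fun i : Fin n => u.get ⟨i, by omega⟩) = u := by
            apply List.ext_get
            · rw [List.length_ofFn, hu]
            · intro i h1 h2
              rw [List.get_ofFn]
              rfl
          rw [← hofn]
          exact key _
        have hmem : (g1 : TAut p)⁻¹ * (g2 : TAut p) ∈ G := mul_mem (inv_mem g1.2) g2.2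
        have hfixn : ∀ u : Vertex p, u.length ≤ n →
            (((g1 : TAut p)⁻¹ * (g2 : TAut p) : TAut p) : Equiv.Perm (Vertex p)) u = u := by
          intro u hu
          have hpad : (u ++ List.replicate (n - u.length) (0 : Fin p)).length = n := by
            rw [List.length_append, List.length_replicate]; omega
          have h12 := keyv _ hpad
          have e1 := take_apply (g1 : TAut p) u (List.replicate (n - u.length) (0 : Fin p))
          have e2 := take_apply (g2 : TAut p) u (List.replicate (n - u.length) (0 : Fin p))
          simp only [MulMemClass.coe_mul, InvMemClass.coe_inv, Equiv.Perm.mul_apply]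
          have heq : ((g2 : TAut p) : Equiv.Perm (Vertex p)) u
              = ((g1 : TAut p) : Equiv.Perm (Vertex p)) u := by
            rw [← e1, ← e2, h12]
          rw [heq, Equiv.Perm.inv_apply_self]
        have h1 := triv _ hmem hfixn
        rw [inv_mul_eq_one] at h1
        exact Subtype.ext h1
      have hfin : Finite ↥G := Finite.of_injective F hFinj
      exact absurd hfin (by rw [not_finite_iff_infinite]; exact hinf)


end TreeFT
end
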